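/- Suppose η > 0 and 1 ≥ β > max{(1 − √(ηλ_min(H)))², (1 − √(ηλ_max(H)))²}. Then A, viewed as a complex 2n×2n matrix, is diagonalizable over ℂ: there exist an invertible matrix P ∈ ℂ^{2n×2n} and a diagonal matrix D ∈ ℂ^{2n×2n} such that A = P D P⁻¹, and moreover every diagonal entry of D has modulus at most √β. -/

import Mathlib

open scoped BigOperators

lemma hb_aux_disc {β t z : ℝ} (h1 : (1 - t)^2 < β) (h2 : β < (1+t)^2)
    (hz : t^2 = z) : (1 + β - z)^2 < 4*β := by
  nlinarith [mul_pos (sub_pos.2 h1) (sub_pos.2 h2)]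

/-- The heavy-ball iteration matrix `A` is diagonalizable over `ℂ`, with all
eigenvalues of modulus at most `√β`. -/
theorem heavy_ball_matrix_diagonalizable {n : ℕ} (hn : 0 < n)
    (H : Matrix (Fin n) (Fin n) ℝ) (hH : H.IsHermitian) (hPSD : H.PosSemidef)
    (lmin lmax : ℝ)
    (hlmin : IsLeast (Set.range hH.eigenvalues) lmin)
    (hlmax : IsGreatest (Set.range hH.eigenvalues) lmax)
    (η β : ℝ) (hη : 0 < η) (hβ1 : β ≤ 1)
    (hβ : max ((1 - Real.sqrt (η * lmin))^2) ((1 - Real.sqrt (η * lmax))^2) < β)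
    (A : Matrix (Fin n ⊕ Fin n) (Fin n ⊕ Fin n) ℝ)
    (hA : A = Matrix.fromBlocks
      ((1 + β) • (1 : Matrix (Fin n) (Fin n) ℝ) - η • H)
      ((-β) • (1 : Matrix (Fin n) (Fin n) ℝ))
      (1 : Matrix (Fin n) (Fin n) ℝ) (0 : Matrix (Fin n) (Fin n) ℝ)) :
    ∃ (P D : Matrix (Fin n ⊕ Fin n) (Fin n ⊕ Fin n) ℂ),
      IsUnit P.det ∧ D.IsDiag ∧
      A.map (fun x : ℝ => (x : ℂ)) = P * D * P⁻¹ ∧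
      ∀ i, ‖D i i‖ ≤ Real.sqrt β := by
  classical
  obtain ⟨hmin_mem, hmin_lb⟩ := hlmin
  obtain ⟨hmax_mem, hmax_ub⟩ := hlmax
  have hβmax := max_lt_iff.mp hβ
  have hβpos : 0 < β := lt_of_le_of_lt (sq_nonneg _) hβmax.1
  set lam := hH.eigenvalues with hlamdef
  have hlam_nonneg : ∀ i, 0 ≤ lam i := fun i => hPSD.eigenvalues_nonneg i
  have hlmin_nonneg : 0 ≤ lmin := by
    obtain ⟨i, hi⟩ := hmin_mem; exact hi ▸ hlam_nonneg i
  have hlmin_pos : 0 < lmin := by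
    rcases hlmin_nonneg.lt_or_eq with h | h
    · exact h
    · exfalso
      have h1 := hβmax.1
      rw [← h, mul_zero, Real.sqrt_zero] at h1
      norm_num at h1
      linarith
  -- discriminant facts
  set a : Fin n → ℝ := fun i => 1 + β - η * lam i with hadef
  have hdisc : ∀ i, (a i)^2 < 4*β := by
    intro i
    have h1 : lmin ≤ lam i := hmin_lb ⟨i, rfl⟩
    have h2 : lam i ≤ lmax := hmax_ub ⟨i, rfl⟩
    set t := Real.sqrt (η * lam i) with ht
    have ht2 : t^2 = η * lam i := Real.sq_sqrt (mul_nonneg hη.le (hlam_nonneg i))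
    have ht0 : Real.sqrt (η * lmin) ≤ t := Real.sqrt_le_sqrt (by nlinarith)
    have ht1 : t ≤ Real.sqrt (η * lmax) := Real.sqrt_le_sqrt (by nlinarith)
    have htpos : 0 < Real.sqrt (η * lmin) := Real.sqrt_pos.mpr (by positivity)
    have hIA : (1 - t)^2 < β := by
      rcases le_total (1 - t) 0 with h | h
      · have h3 : 1 - Real.sqrt (η * lmax) ≤ 1 - t := by linarith
        nlinarith [hβmax.2]
      · have h3 : 1 - t ≤ 1 - Real.sqrt (η * lmin) := by linarith
        nlinarith [hβmax.1]
    have hIB : β < (1 + t)^2 := by nlinarith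
    exact hb_aux_disc hIA hIB ht2
  set s : Fin n → ℝ := fun i => Real.sqrt (4*β - (a i)^2) with hsdef
  have hs2 : ∀ i, (s i)^2 = 4*β - (a i)^2 := fun i =>
    Real.sq_sqrt (by linarith [hdisc i])
  have hspos : ∀ i, 0 < s i := fun i =>
    Real.sqrt_pos.mpr (by linarith [hdisc i])
  set μ₁ : Fin n → ℂ := fun i => ((a i / 2 : ℝ) : ℂ) + ((s i / 2 : ℝ) : ℂ) * Complex.I with hμ₁def
  set μ₂ : Fin n → ℂ := fun i => ((a i / 2 : ℝ) : ℂ) + ((-(s i / 2) : ℝ) : ℂ) * Complex.I with hμ₂def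
  have hs2c : ∀ i, ((s i : ℂ))^2 = 4*(β:ℂ) - ((a i : ℂ))^2 := by
    intro i
    have h := congrArg (fun x : ℝ => (x : ℂ)) (hs2 i)
    push_cast at h
    exact h
  have hquad₁ : ∀ i, μ₁ i ^ 2 = (a i : ℂ) * μ₁ i - β := by
    intro i
    show (((a i / 2 : ℝ) : ℂ) + ((s i / 2 : ℝ) : ℂ) * Complex.I) ^ 2
      = (a i : ℂ) * (((a i / 2 : ℝ) : ℂ) + ((s i / 2 : ℝ) : ℂ) * Complex.I) - β
    push_cast
    linear_combination (-1/4 : ℂ) * hs2c i + (((s i : ℝ):ℂ)^2/4) * Complex.I_sq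
  have hquad₂ : ∀ i, μ₂ i ^ 2 = (a i : ℂ) * μ₂ i - β := by
    intro i
    show (((a i / 2 : ℝ) : ℂ) + ((-(s i / 2) : ℝ) : ℂ) * Complex.I) ^ 2
      = (a i : ℂ) * (((a i / 2 : ℝ) : ℂ) + ((-(s i / 2) : ℝ) : ℂ) * Complex.I) - β
    push_cast
    linear_combination (-1/4 : ℂ) * hs2c i + (((s i : ℝ):ℂ)^2/4) * Complex.I_sq
  -- spectral decomposition
  set Q : Matrix (Fin n) (Fin n) ℝ := (hH.eigenvectorUnitary : Matrix (Fin n) (Fin n) ℝ) with hQdef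
  have hQQ : Q * star Q = 1 := Matrix.mem_unitaryGroup_iff.mp hH.eigenvectorUnitary.2
  have hQQ' : star Q * Q = 1 := Matrix.mem_unitaryGroup_iff'.mp hH.eigenvectorUnitary.2
  have hspec : H * Q = Q * Matrix.diagonal lam := by
    conv_lhs => rw [hH.spectral_theorem, Unitary.conjStarAlgAut_apply]
    rw [Matrix.mul_assoc, Matrix.mul_assoc, hQQ', Matrix.mul_one]
    congr 1
  set fC : ℝ →+* ℂ := Complex.ofRealHom with hfCdef
  set Qc : Matrix (Fin n) (Fin n) ℂ := Q.map fC with hQcdef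
  set Hc : Matrix (Fin n) (Fin n) ℂ := H.map fC with hHcdef
  have hspecC : Hc * Qc = Qc * Matrix.diagonal (fun i => (lam i : ℂ)) := by
    have h := congrArg (fun M : Matrix (Fin n) (Fin n) ℝ => M.map fC) hspec
    simp only [Matrix.map_mul] at h
    rw [Matrix.diagonal_map (map_zero fC)] at h
    exact h
  set D₁ : Matrix (Fin n) (Fin n) ℂ := Matrix.diagonal μ₁ with hD₁def
  set D₂ : Matrix (Fin n) (Fin n) ℂ := Matrix.diagonal μ₂ with hD₂def
  set P : Matrix (Fin n ⊕ Fin n) (Fin n ⊕ Fin n) ℂ :=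
    Matrix.fromBlocks (Qc * D₁) (Qc * D₂) Qc Qc with hPdef
  set Dm : Matrix (Fin n ⊕ Fin n) (Fin n ⊕ Fin n) ℂ :=
    Matrix.fromBlocks D₁ 0 0 D₂ with hDmdef
  -- invertibility of P
  have hQdet : IsUnit Q.det := by
    have h := congrArg Matrix.det hQQ
    rw [Matrix.det_mul, Matrix.det_one] at h
    exact IsUnit.of_mul_eq_one _ h
  have hQcdet : IsUnit Qc.det := by
    have h : fC Q.det = Qc.det := by
      rw [RingHom.map_det, RingHom.mapMatrix_apply]
    rw [← h]
    exact hQdet.map fC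
  have hPfact : P = Matrix.fromBlocks Qc 0 0 Qc * Matrix.fromBlocks D₁ D₂ 1 1 := by
    rw [Matrix.fromBlocks_multiply]
    simp [hPdef]
  have hμdiff : ∀ i, μ₁ i - μ₂ i ≠ 0 := by
    intro i
    have : μ₁ i - μ₂ i = ((s i : ℝ) : ℂ) * Complex.I := by
      rw [hμ₁def, hμ₂def]; push_cast; ring
    rw [this]
    exact mul_ne_zero (Complex.ofReal_ne_zero.mpr (ne_of_gt (hspos i))) Complex.I_ne_zero
  have hPdet : IsUnit P.det := by
    rw [hPfact, Matrix.det_mul, Matrix.det_fromBlocks_zero₂₁, Matrix.det_fromBlocks_one₂₂,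
      Matrix.mul_one, hD₁def, hD₂def, Matrix.diagonal_sub, Matrix.det_diagonal]
    refine ((hQcdet.mul hQcdet).mul (isUnit_iff_ne_zero.mpr ?_))
    exact Finset.prod_ne_zero_iff.mpr fun i _ => hμdiff i
  refine ⟨P, Dm, hPdet, ?_, ?_, ?_⟩
  · exact Matrix.IsDiag.fromBlocks (Matrix.isDiag_diagonal _) (Matrix.isDiag_diagonal _)
  · -- A = P Dm P⁻¹
    have hTLc : ((1 + β) • (1 : Matrix (Fin n) (Fin n) ℝ) - η • H).map (fun x : ℝ => (x:ℂ))
        = (1 + (β:ℂ)) • 1 - (η:ℂ) • Hc := by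
      ext i j
      by_cases hij : i = j <;>
        simp [Matrix.map_apply, Matrix.one_apply, hij, hHcdef, hfCdef] <;> push_cast <;> ring
    have hTRc : ((-β) • (1 : Matrix (Fin n) (Fin n) ℝ)).map (fun x : ℝ => (x:ℂ))
        = (-(β:ℂ)) • 1 := by
      ext i j
      by_cases hij : i = j <;> simp [Matrix.map_apply, Matrix.one_apply, hij]
    have h1c : (1 : Matrix (Fin n) (Fin n) ℝ).map (fun x : ℝ => (x:ℂ)) = 1 := by
      ext i j
      by_cases hij : i = j <;> simp [Matrix.map_apply, Matrix.one_apply, hij]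
    have h0c : (0 : Matrix (Fin n) (Fin n) ℝ).map (fun x : ℝ => (x:ℂ)) = 0 := by
      ext i j; simp
    have hAc : A.map (fun x : ℝ => (x:ℂ)) =
        Matrix.fromBlocks ((1 + (β:ℂ)) • 1 - (η:ℂ) • Hc) ((-(β:ℂ)) • 1) 1 0 := by
      rw [hA, Matrix.fromBlocks_map, hTLc, hTRc, h1c, h0c]
    have hac : ∀ j, ((a j : ℝ):ℂ) = 1 + (β:ℂ) - (η:ℂ) * (lam j : ℂ) := by
      intro j
      show ((1 + β - η * lam j : ℝ) : ℂ) = _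
      push_cast
      ring
    have hkey : ∀ (μ : Fin n → ℂ), (∀ i, μ i ^ 2 = (a i : ℂ) * μ i - β) →
        ((1 + (β:ℂ)) • 1 - (η:ℂ) • Hc) * (Qc * Matrix.diagonal μ)
          + (-(β:ℂ)) • (1 : Matrix (Fin n) (Fin n) ℂ) * Qc
          = Qc * Matrix.diagonal μ * Matrix.diagonal μ := by
      intro μ hq
      have h1 : ((1 + (β:ℂ)) • 1 - (η:ℂ) • Hc) * (Qc * Matrix.diagonal μ)
          = (1 + (β:ℂ)) • (Qc * Matrix.diagonal μ)
            - (η:ℂ) • (Qc * Matrix.diagonal (fun j => (lam j : ℂ) * μ j)) := by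
        rw [Matrix.sub_mul, Matrix.smul_mul, Matrix.one_mul, Matrix.smul_mul,
          ← Matrix.mul_assoc, hspecC, Matrix.mul_assoc, Matrix.diagonal_mul_diagonal]
      rw [h1, Matrix.smul_mul, Matrix.one_mul, Matrix.mul_assoc, Matrix.diagonal_mul_diagonal]
      ext i j
      simp only [Matrix.sub_apply, Matrix.add_apply, Matrix.smul_apply, Matrix.mul_diagonal,
        smul_eq_mul]
      linear_combination (-(Qc i j)) * hq j - (Qc i j * μ j) * hac j
    have hAP : A.map (fun x : ℝ => (x:ℂ)) * P = P * Dm := by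
      rw [hAc, hPdef, hDmdef, Matrix.fromBlocks_multiply, Matrix.fromBlocks_multiply,
        hD₁def, hD₂def, hkey μ₁ hquad₁, hkey μ₂ hquad₂]
      simp [Matrix.mul_assoc]
    have hPinv : P * P⁻¹ = 1 := Matrix.mul_nonsing_inv P hPdet
    calc A.map (fun x : ℝ => (x:ℂ))
        = A.map (fun x : ℝ => (x:ℂ)) * (P * P⁻¹) := by rw [hPinv, Matrix.mul_one]
      _ = A.map (fun x : ℝ => (x:ℂ)) * P * P⁻¹ := by rw [Matrix.mul_assoc]
      _ = P * Dm * P⁻¹ := by rw [hAP]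
  · -- modulus bound
    rintro (i | i)
    · have hD : Dm (Sum.inl i) (Sum.inl i) = μ₁ i := by
        simp [hDmdef, hD₁def, Matrix.fromBlocks, Matrix.diagonal]
      rw [hD]
      have h : μ₁ i = ((a i / 2 : ℝ) : ℂ) + ((s i / 2 : ℝ) : ℂ) * Complex.I := rfl
      rw [h, Complex.norm_add_mul_I]
      apply le_of_eq
      congr 1
      linear_combination (1/4 : ℝ) * hs2 i
    · have hD : Dm (Sum.inr i) (Sum.inr i) = μ₂ i := by
        simp [hDmdef, hD₂def, Matrix.fromBlocks, Matrix.diagonal]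
      rw [hD]
      have h : μ₂ i = ((a i / 2 : ℝ) : ℂ) + ((-(s i / 2) : ℝ) : ℂ) * Complex.I := rfl
      rw [h, Complex.norm_add_mul_I]
      apply le_of_eq
      congr 1
      linear_combination (1/4 : ℝ) * hs2 i
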